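/- Let (M^{2n+1}, φ, ξ, η, g) be an almost α-Kenmotsu manifold whose characteristic vector field ξ belongs to the (κ,μ)'-nullity distribution, and let (φ̄, ξ̄, η̄, ḡ) be the almost (α/β)-Kenmotsu structure obtained by the D-homothetic deformation with positive constant β. Then the deformed curvature satisfies R̄_{XY}ξ = R_{XY}ξ for all vector fields X, Y, and ξ̄ belongs to the (κ̄,μ̄)'-nullity distribution of the deformed structure with κ̄ = κ/β² and μ̄ = μ/β². -/

import Mathlib

/- Common framework: a (2n+1)-dimensional manifold is modelled by an open subset `s`
of Euclidean space; tensor fields are given pointwise (evaluated on constant vector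
fields), connections are given by their Christoffel symbols, and covariant
derivatives / curvatures are expressed via `fderiv`. -/

noncomputable section

namespace AKG

open scoped RealInnerProductSpace

abbrev E (m : ℕ) : Type := EuclideanSpace ℝ (Fin m)

variable {V : Type*} [NormedAddCommGroup V] [NormedSpace ℝ V]

/-- A Riemannian metric on `s`, as a pointwise symmetric positive bilinear form. -/
def IsMetricOn (s : Set V) (g : V → V → V → ℝ) : Prop :=
  (∀ u v : V, ContDiffOn ℝ (⊤ : ℕ∞) (fun p => g p u v) s) ∧
  (∀ p ∈ s, ∀ u v : V, g p u v = g p v u) ∧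
  (∀ p ∈ s, ∀ v : V, IsLinearMap ℝ (fun u : V => g p u v)) ∧
  (∀ p ∈ s, ∀ u : V, u ≠ 0 → 0 < g p u u)

/-- A linear connection on `s`, via its Christoffel symbols. -/
def IsConnectionOn (s : Set V) (Γ : V → V → V → V) : Prop :=
  (∀ u v : V, ContDiffOn ℝ (⊤ : ℕ∞) (fun p => Γ p u v) s) ∧
  (∀ p ∈ s, ∀ v : V, IsLinearMap ℝ (fun u : V => Γ p u v)) ∧
  (∀ p ∈ s, ∀ u : V, IsLinearMap ℝ (fun v : V => Γ p u v))

/-- The Levi-Civita connection of `g` on `s`: torsion-free and metric. -/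
def IsLeviCivitaOn (s : Set V) (g : V → V → V → ℝ) (Γ : V → V → V → V) : Prop :=
  IsConnectionOn s Γ ∧
  (∀ p ∈ s, ∀ u v : V, Γ p u v = Γ p v u) ∧
  (∀ p ∈ s, ∀ u v w : V,
    fderiv ℝ (fun q => g q v w) p u = g p (Γ p u v) w + g p v (Γ p u w))

/-- Covariant derivative `∇ᵤ X` of a vector field `X` at `p`. -/
def cov (Γ : V → V → V → V) (X : V → V) (p u : V) : V :=
  fderiv ℝ X p u + Γ p u (X p)

/-- Curvature tensor `R(u,v)w` at `p` (evaluated on constant extensions). -/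
def Rm (Γ : V → V → V → V) (p u v w : V) : V :=
  fderiv ℝ (fun q => Γ q v w) p u - fderiv ℝ (fun q => Γ q u w) p v
    + Γ p u (Γ p v w) - Γ p v (Γ p u w)

/-- Covariant derivative `(∇ᵤ A)(v)` of a (1,1)-tensor field `A`. -/
def covOp (Γ : V → V → V → V) (A : V → V → V) (p u v : V) : V :=
  fderiv ℝ (fun q => A q v) p u + Γ p u (A p v) - A p (Γ p u v)

/-- Covariant derivative of a (1,2)-tensor field. -/
def covT2 (Γ : V → V → V → V) (A : V → V → V → V) (p x u v : V) : V :=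
  fderiv ℝ (fun q => A q u v) p x + Γ p x (A p u v)
    - A p (Γ p x u) v - A p u (Γ p x v)

/-- Covariant derivative of a (1,3)-tensor field. -/
def covT3 (Γ : V → V → V → V) (B : V → V → V → V → V) (p x u v w : V) : V :=
  fderiv ℝ (fun q => B q u v w) p x + Γ p x (B p u v w)
    - B p (Γ p x u) v w - B p u (Γ p x v) w - B p u v (Γ p x w)

/-- Local symmetry: `∇R = 0`. -/
def LocallySymmetricOn (s : Set V) (Γ : V → V → V → V) : Prop :=
  ∀ p ∈ s, ∀ x u v w : V, covT3 Γ (Rm Γ) p x u v w = 0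

/-- Constant sectional curvature `k`. -/
def ConstCurvOn (s : Set V) (g : V → V → V → ℝ) (Γ : V → V → V → V) (k : ℝ) : Prop :=
  ∀ p ∈ s, ∀ u v w : V, Rm Γ p u v w = k • (g p v w • u - g p u w • v)

def HasConstCurv (s : Set V) (g : V → V → V → ℝ) (k : ℝ) : Prop :=
  ∃ Γ : V → V → V → V, IsLeviCivitaOn s g Γ ∧ ConstCurvOn s g Γ k

/-- Torsion of a connection (with the factor 1/2 normalization of the paper). -/
def torsion (Γ : V → V → V → V) (p u v : V) : V := (2 : ℝ)⁻¹ • (Γ p u v - Γ p v u)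

/-- An almost contact metric structure on `s`. -/
structure ACM (s : Set V) where
  phi : V → V → V
  xi : V → V
  eta : V → V → ℝ
  g : V → V → V → ℝ
  smooth_phi : ∀ u : V, ContDiffOn ℝ (⊤ : ℕ∞) (fun p => phi p u) s
  smooth_xi : ContDiffOn ℝ (⊤ : ℕ∞) xi s
  smooth_eta : ∀ u : V, ContDiffOn ℝ (⊤ : ℕ∞) (fun p => eta p u) s
  lin_phi : ∀ p ∈ s, IsLinearMap ℝ (phi p)
  lin_eta : ∀ p ∈ s, IsLinearMap ℝ (eta p)
  metric : IsMetricOn s g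
  phi_sq : ∀ p ∈ s, ∀ u : V, phi p (phi p u) = -u + eta p u • xi p
  eta_xi : ∀ p ∈ s, eta p (xi p) = 1
  compat : ∀ p ∈ s, ∀ u v : V, g p (phi p u) (phi p v) = g p u v - eta p u * eta p v

/-- Fundamental 2-form `Φ(u,v) = g(u, φ v)`. -/
def FPhi {s : Set V} (S : ACM s) (p u v : V) : ℝ := S.g p u (S.phi p v)

/-- Lie derivative `(L_ξ φ)(u)` at `p` (constant extension of `u`). -/
def lieXiPhi (phi : V → V → V) (xi : V → V) (p u : V) : V :=
  fderiv ℝ (fun q => phi q u) p (xi p) - fderiv ℝ xi p (phi p u)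
    + phi p (fderiv ℝ xi p u)

/-- The operator `h' = (1/(2α)) (L_ξ φ) ∘ φ`. -/
def hpr (α : ℝ) (phi : V → V → V) (xi : V → V) (p u : V) : V :=
  (1 / (2 * α)) • lieXiPhi phi xi p (phi p u)

/-- `dη(u,v)` (constant extensions). -/
def dEta (eta : V → V → ℝ) (p u v : V) : ℝ :=
  fderiv ℝ (fun q => eta q v) p u - fderiv ℝ (fun q => eta q u) p v

/-- `S` is an almost α-Kenmotsu structure on `s` : `dη = 0` and `dΦ = 2α η ∧ Φ`. -/
structure IsAK (s : Set V) (S : ACM s) (α : ℝ) : Prop where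
  pos : 0 < α
  deta : ∀ p ∈ s, ∀ u v : V, dEta S.eta p u v = 0
  dphi : ∀ p ∈ s, ∀ u v w : V,
    fderiv ℝ (fun q => FPhi S q v w) p u - fderiv ℝ (fun q => FPhi S q u w) p v
      + fderiv ℝ (fun q => FPhi S q u v) p w
    = 2 * α * (S.eta p u * FPhi S p v w - S.eta p v * FPhi S p u w
        + S.eta p w * FPhi S p u v)

/-- Nijenhuis torsion `[φ,φ](u,v)` at `p` (constant extensions). -/
def nijPhi (phi : V → V → V) (p u v : V) : V :=
  fderiv ℝ (fun q => phi q v) p (phi p u) - fderiv ℝ (fun q => phi q u) p (phi p v)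
    + phi p (fderiv ℝ (fun q => phi q u) p v) - phi p (fderiv ℝ (fun q => phi q v) p u)

/-- Normality: `N = [φ,φ] + 2 dη ⊗ ξ = 0`. -/
def IsNormal (s : Set V) (S : ACM s) : Prop :=
  ∀ p ∈ s, ∀ u v : V, nijPhi S.phi p u v + (2 * dEta S.eta p u v) • S.xi p = 0

/-- CR-integrability: the Nijenhuis torsion of φ vanishes on `D = ker η`
(equivalently the integral manifolds of `D` are Kähler). -/
def CRIntegrableOn (s : Set V) (S : ACM s) : Prop :=
  ∀ p ∈ s, ∀ u v : V, S.eta p u = 0 → S.eta p v = 0 → nijPhi S.phi p u v = 0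

/-- `ξ` belongs to the (κ,μ)'-nullity distribution. -/
def KMuNullity (s : Set V) (S : ACM s) (α κ μ : ℝ) (Γ : V → V → V → V) : Prop :=
  ∀ p ∈ s, ∀ u v : V,
    Rm Γ p u v (S.xi p)
      = κ • (S.eta p v • u - S.eta p u • v)
        + μ • (S.eta p v • hpr α S.phi S.xi p u - S.eta p u • hpr α S.phi S.xi p v)

/-- `h'` is η-parallel. -/
def EtaParallelH (s : Set V) (S : ACM s) (α : ℝ) (Γ : V → V → V → V) : Prop :=
  ∀ p ∈ s, ∀ u v w : V, S.eta p u = 0 → S.eta p v = 0 → S.eta p w = 0 →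
    S.g p (covOp Γ (hpr α S.phi S.xi) p u v) w = 0

/-- `∇_ξ h' = 0`. -/
def XiParallelH (s : Set V) (S : ACM s) (α : ℝ) (Γ : V → V → V → V) : Prop :=
  ∀ p ∈ s, ∀ v : V, covOp Γ (hpr α S.phi S.xi) p (S.xi p) v = 0

/-- The canonical connection `∇̃_X Y = ∇_X Y + α g(X + h'X, Y)ξ − α η(Y)(X + h'X)`. -/
def canonical {s : Set V} (α : ℝ) (S : ACM s) (Γ : V → V → V → V) : V → V → V → V :=
  fun p u v =>
    Γ p u v + (α * S.g p (u + hpr α S.phi S.xi p u) v) • S.xi p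
      - (α * S.eta p v) • (u + hpr α S.phi S.xi p u)

def ParallelTorsion (s : Set V) (Γ : V → V → V → V) : Prop :=
  ∀ p ∈ s, ∀ x u v : V, covT2 Γ (torsion Γ) p x u v = 0

def ParallelCurv (s : Set V) (Γ : V → V → V → V) : Prop :=
  ∀ p ∈ s, ∀ x u v w : V, covT3 Γ (Rm Γ) p x u v w = 0

def FlatCurv (s : Set V) (Γ : V → V → V → V) : Prop :=
  ∀ p ∈ s, ∀ u v w : V, Rm Γ p u v w = 0

def HasEigen (h : V → V) (c : ℝ) : Prop := ∃ u : V, u ≠ 0 ∧ h u = c • u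

/-- Multiplicity of the eigenvalue `c` of a (pointwise linear) operator. -/
def eigMult (h : V → V) (c : ℝ) : ℕ :=
  Module.finrank ℝ ↥(Submodule.span ℝ {u : V | h u = c • u})

/-- `0` is a simple eigenvalue of `h'`: its kernel is spanned by `ξ`. -/
def KernelIsXiLine (xi₀ : V) (h : V → V) : Prop :=
  ∀ u : V, h u = 0 → ∃ a : ℝ, u = a • xi₀

def hprNonzero (s : Set V) (S : ACM s) (α : ℝ) : Prop :=
  ∃ p ∈ s, ∃ u : V, hpr α S.phi S.xi p u ≠ 0

/-- `S'` is the D-homothetic deformation of `S` with constant `β`. -/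
def IsDHom (s : Set V) (S S' : ACM s) (β : ℝ) : Prop :=
  ∀ p ∈ s,
    (∀ u : V, S'.phi p u = S.phi p u) ∧ S'.xi p = β⁻¹ • S.xi p ∧
    (∀ u : V, S'.eta p u = β * S.eta p u) ∧
    (∀ u v : V, S'.g p u v = β * S.g p u v + β * (β - 1) * (S.eta p u * S.eta p v))

/-- Local equivalence of almost contact metric structures. -/
def LocallyEquivalent (s : Set V) (S : ACM s) (s' : Set V) (S' : ACM s') : Prop :=
  ∀ p ∈ s, ∀ q ∈ s', ∃ (U U' : Set V) (f finv : V → V),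
    p ∈ U ∧ IsOpen U ∧ U ⊆ s ∧ q ∈ U' ∧ IsOpen U' ∧ U' ⊆ s' ∧ f p = q ∧
    ContDiffOn ℝ (⊤ : ℕ∞) f U ∧ Set.BijOn f U U' ∧
    ContDiffOn ℝ (⊤ : ℕ∞) finv U' ∧ (∀ x ∈ U, finv (f x) = x) ∧
    ∀ x ∈ U,
      fderiv ℝ f x (S.xi x) = S'.xi (f x) ∧
      (∀ u : V, fderiv ℝ f x (S.phi x u) = S'.phi (f x) (fderiv ℝ f x u)) ∧
      (∀ u : V, S'.eta (f x) (fderiv ℝ f x u) = S.eta x u) ∧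
      (∀ u v : V, S'.g (f x) (fderiv ℝ f x u) (fderiv ℝ f x v) = S.g x u v)

/-- Local equivalence up to a D-homothetic deformation. -/
def EquivUpToDHom (s : Set V) (S : ACM s) (s' : Set V) (S' : ACM s') : Prop :=
  ∃ β : ℝ, 0 < β ∧ ∃ S₁ : ACM s, IsDHom s S S₁ β ∧ LocallyEquivalent s S₁ s' S'

/-- Involutivity (integrability) of a distribution. -/
def IsInvolutive (s : Set V) (D : V → Set V) : Prop :=
  ∀ X Y : V → V, (∀ p ∈ s, DifferentiableAt ℝ X p) → (∀ p ∈ s, DifferentiableAt ℝ Y p) →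
    (∀ p ∈ s, X p ∈ D p) → (∀ p ∈ s, Y p ∈ D p) →
    ∀ p ∈ s, fderiv ℝ Y p (X p) - fderiv ℝ X p (Y p) ∈ D p

/-- The leaves of the distribution `D` are totally geodesic. -/
def TotallyGeodesicDist (s : Set V) (D : V → Set V) (Γ : V → V → V → V) : Prop :=
  ∀ X Y : V → V, (∀ p ∈ s, DifferentiableAt ℝ X p) → (∀ p ∈ s, DifferentiableAt ℝ Y p) →
    (∀ p ∈ s, X p ∈ D p) → (∀ p ∈ s, Y p ∈ D p) →
    ∀ p ∈ s, cov Γ Y p (X p) ∈ D p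

/-- The leaves of the distribution `D` are totally umbilical. -/
def TotallyUmbilicalDist (s : Set V) (D : V → Set V) (g : V → V → V → ℝ)
    (Γ : V → V → V → V) : Prop :=
  ∃ H : V → V, (∀ p ∈ s, ∀ w ∈ D p, g p (H p) w = 0) ∧
    ∀ X Y : V → V, (∀ p ∈ s, DifferentiableAt ℝ X p) → (∀ p ∈ s, DifferentiableAt ℝ Y p) →
      (∀ p ∈ s, X p ∈ D p) → (∀ p ∈ s, Y p ∈ D p) →
      ∀ p ∈ s, cov Γ Y p (X p) - g p (X p) (Y p) • H p ∈ D p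

/-- The eigendistribution `[λ]` of `h'`. -/
def eigDist {s : Set V} (α : ℝ) (S : ACM s) (lam : ℝ) : V → Set V :=
  fun p => {u : V | hpr α S.phi S.xi p u = lam • u ∧ S.eta p u = 0}

/-- The distribution `[ξ] ⊕ [λ]`. -/
def xiPlusEigDist {s : Set V} (α : ℝ) (S : ACM s) (lam : ℝ) : V → Set V :=
  fun p => {u : V | hpr α S.phi S.xi p u = lam • (u - S.eta p u • S.xi p)}

/-- An almost Hermitian structure on an open set of `E m`. -/
structure AHerm (m : ℕ) (W : Set (E m)) where
  J : E m → E m → E m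
  h : E m → E m → E m → ℝ
  smooth_J : ∀ u : E m, ContDiffOn ℝ (⊤ : ℕ∞) (fun p => J p u) W
  lin_J : ∀ p ∈ W, IsLinearMap ℝ (J p)
  metric : IsMetricOn W h
  J_sq : ∀ p ∈ W, ∀ u : E m, J p (J p u) = -u
  compat : ∀ p ∈ W, ∀ u v : E m, h p (J p u) (J p v) = h p u v

/-- The Kähler form of an almost Hermitian structure. -/
def Kform {m : ℕ} {W : Set (E m)} (K : AHerm m W) (p u v : E m) : ℝ := K.h p u (K.J p v)

/-- Almost Kähler: the Kähler form is closed. -/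
def IsAlmostKaehler {m : ℕ} {W : Set (E m)} (K : AHerm m W) : Prop :=
  ∀ p ∈ W, ∀ u v w : E m,
    fderiv ℝ (fun q => Kform K q v w) p u - fderiv ℝ (fun q => Kform K q u w) p v
      + fderiv ℝ (fun q => Kform K q u v) p w = 0

/-- Kähler: almost Kähler with integrable `J`. -/
def IsKaehler {m : ℕ} {W : Set (E m)} (K : AHerm m W) : Prop :=
  IsAlmostKaehler K ∧ ∀ p ∈ W, ∀ u v : E m, nijPhi K.J p u v = 0

/-- `M` is locally a warped product `M' ×_f N` of an open interval and an almost
Kähler manifold, with warping function `f = c e^{α t}`. -/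
def LocWarpedIntervalAK (n : ℕ) (s : Set (E (2*n+1))) (S : ACM s) (α : ℝ) : Prop :=
  ∀ p ∈ s, ∃ (U : Set (E (2*n+1))) (I : Set ℝ) (W : Set (E (2*n)))
    (K : AHerm (2*n) W) (c : ℝ) (ψ : E (2*n+1) → ℝ × E (2*n))
    (χ : ℝ × E (2*n) → E (2*n+1)),
    p ∈ U ∧ IsOpen U ∧ U ⊆ s ∧ IsOpen I ∧ I.OrdConnected ∧ IsOpen W ∧
    IsAlmostKaehler K ∧ 0 < c ∧
    ContDiffOn ℝ (⊤ : ℕ∞) ψ U ∧ Set.BijOn ψ U (I ×ˢ W) ∧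
    ContDiffOn ℝ (⊤ : ℕ∞) χ (I ×ˢ W) ∧ (∀ x ∈ U, χ (ψ x) = x) ∧
    ∀ q ∈ U, ∀ u v : E (2*n+1),
      S.g q u v = (fderiv ℝ ψ q u).1 * (fderiv ℝ ψ q v).1
        + (c * Real.exp (α * (ψ q).1))^2
          * K.h (ψ q).2 (fderiv ℝ ψ q u).2 (fderiv ℝ ψ q v).2

/-- Local isometry with a Riemannian product of constant curvature manifolds. -/
def LocIsomProd (m n₁ n₂ : ℕ) (s : Set (E m)) (g : E m → E m → E m → ℝ)
    (k₁ k₂ : ℝ) : Prop :=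
  ∀ p ∈ s, ∃ (U : Set (E m)) (W₁ : Set (E n₁)) (W₂ : Set (E n₂))
    (g₁ : E n₁ → E n₁ → E n₁ → ℝ) (g₂ : E n₂ → E n₂ → E n₂ → ℝ)
    (ψ : E m → E n₁ × E n₂) (χ : E n₁ × E n₂ → E m),
    p ∈ U ∧ IsOpen U ∧ U ⊆ s ∧ IsOpen W₁ ∧ IsOpen W₂ ∧
    IsMetricOn W₁ g₁ ∧ IsMetricOn W₂ g₂ ∧
    HasConstCurv W₁ g₁ k₁ ∧ HasConstCurv W₂ g₂ k₂ ∧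
    ContDiffOn ℝ (⊤ : ℕ∞) ψ U ∧ Set.BijOn ψ U (W₁ ×ˢ W₂) ∧
    ContDiffOn ℝ (⊤ : ℕ∞) χ (W₁ ×ˢ W₂) ∧ (∀ x ∈ U, χ (ψ x) = x) ∧
    ∀ q ∈ U, ∀ u v : E m,
      g q u v = g₁ (ψ q).1 (fderiv ℝ ψ q u).1 (fderiv ℝ ψ q v).1
        + g₂ (ψ q).2 (fderiv ℝ ψ q u).2 (fderiv ℝ ψ q v).2

/-- The axioms characterizing the canonical connection of a CR-integrable
almost α-Kenmotsu structure: `φ`, `g`, `η` parallel, together with the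
torsion conditions a), b), c). -/
def IsCanonicalFor (s : Set V) (S : ACM s) (α : ℝ) (Γt : V → V → V → V) : Prop :=
  IsConnectionOn s Γt ∧
  (∀ p ∈ s, ∀ u v : V, covOp Γt S.phi p u v = 0) ∧
  (∀ p ∈ s, ∀ u v w : V,
    fderiv ℝ (fun q => S.g q v w) p u = S.g p (Γt p u v) w + S.g p v (Γt p u w)) ∧
  (∀ p ∈ s, ∀ u v : V, fderiv ℝ (fun q => S.eta q v) p u = S.eta p (Γt p u v)) ∧
  (∀ p ∈ s, ∀ u v : V, S.eta p u = 0 → S.eta p v = 0 → torsion Γt p u v = 0) ∧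
  (∀ p ∈ s, ∀ u : V, S.eta p u = 0 →
    (2 : ℝ) • torsion Γt p (S.xi p) u = α • (u + hpr α S.phi S.xi p u)) ∧
  (∀ p ∈ s, ∀ u v : V, S.g p (torsion Γt p (S.xi p) u) v
    = S.g p u (torsion Γt p (S.xi p) v))


/-! ### Auxiliary machinery for the proof of `stmt_0` -/

lemma euclid_sum (m : ℕ) (x : E m) : ∑ i, x i • EuclideanSpace.single i (1:ℝ) = x := by
  ext j
  have h := map_sum (EuclideanSpace.proj (𝕜 := ℝ) j)
    (fun i : Fin m => x i • EuclideanSpace.single i (1:ℝ)) Finset.univ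
  simp only [EuclideanSpace.proj, PiLp.proj_apply] at h
  rw [h]
  simp [EuclideanSpace.single_apply]

section Chain

variable {m : ℕ} {s : Set (E m)} {p : E m}
variable (hs : IsOpen s) (hp : p ∈ s) {F : E m → E m → ℝ}
  (hlin : ∀ q ∈ s, IsLinearMap ℝ (F q))
  (hdF : ∀ y, DifferentiableAt ℝ (fun q => F q y) p)

include hs hp hlin hdF

lemma fderiv_lin_add (y z : E m) :
    fderiv ℝ (fun q => F q (y + z)) p = fderiv ℝ (fun q => F q y) p + fderiv ℝ (fun q => F q z) p := by
  have he : (fun q => F q (y + z)) =ᶠ[nhds p] (fun q => F q y + F q z) := by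
    filter_upwards [hs.mem_nhds hp] with q hq
    exact (hlin q hq).map_add y z
  rw [he.fderiv_eq, fderiv_fun_add (hdF y) (hdF z)]

lemma fderiv_lin_smul (c : ℝ) (y : E m) :
    fderiv ℝ (fun q => F q (c • y)) p = c • fderiv ℝ (fun q => F q y) p := by
  have he : (fun q => F q (c • y)) =ᶠ[nhds p] (fun q => c • F q y) := by
    filter_upwards [hs.mem_nhds hp] with q hq
    exact (hlin q hq).map_smul c y
  rw [he.fderiv_eq, fderiv_fun_const_smul (hdF y)]

lemma fderiv_lin_sum (t : Finset (Fin m)) (c : Fin m → ℝ) (y : Fin m → E m) :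
    fderiv ℝ (fun q => F q (∑ i ∈ t, c i • y i)) p
      = ∑ i ∈ t, c i • fderiv ℝ (fun q => F q (y i)) p := by
  classical
  induction t using Finset.induction_on with
  | empty =>
    simp only [Finset.sum_empty]
    have he : (fun q => F q (0 : E m)) =ᶠ[nhds p] (fun _ => (0:ℝ)) := by
      filter_upwards [hs.mem_nhds hp] with q hq
      exact (hlin q hq).mk' _ |>.map_zero
    rw [he.fderiv_eq, fderiv_const_apply]
  | insert _ _ hnot ih =>
    rw [Finset.sum_insert hnot, Finset.sum_insert hnot, fderiv_lin_add hs hp hlin hdF,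
      fderiv_lin_smul hs hp hlin hdF, ih]

/-- Chain rule for `q ↦ F q (X q)` with `F` pointwise linear. -/
lemma chain_hasFDerivAt {X : E m → E m} (hX : DifferentiableAt ℝ X p) :
    HasFDerivAt (fun q => F q (X q))
      ((∑ i : Fin m, F p (EuclideanSpace.single i 1) •
          ((EuclideanSpace.proj i : E m →L[ℝ] ℝ).comp (fderiv ℝ X p)))
        + ∑ i : Fin m, X p i • fderiv ℝ (fun q => F q (EuclideanSpace.single i 1)) p) p := by
  classical
  have key : ∀ q ∈ s, F q (X q) = ∑ i : Fin m, (X q i) * F q (EuclideanSpace.single i 1) := by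
    intro q hq
    conv_lhs => rw [← euclid_sum m (X q)]
    rw [show F q (∑ i : Fin m, X q i • EuclideanSpace.single i (1:ℝ))
        = ((hlin q hq).mk' (F q)) (∑ i : Fin m, X q i • EuclideanSpace.single i (1:ℝ)) from rfl,
      map_sum]
    simp
  have hsum : HasFDerivAt (fun q => ∑ i : Fin m, (X q i) * F q (EuclideanSpace.single i 1))
      (∑ i : Fin m, ((F p (EuclideanSpace.single i 1)) •
          ((EuclideanSpace.proj i : E m →L[ℝ] ℝ).comp (fderiv ℝ X p))
        + X p i • fderiv ℝ (fun q => F q (EuclideanSpace.single i 1)) p)) p := by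
    apply HasFDerivAt.fun_sum
    intro i _
    have h1 : HasFDerivAt (fun q => X q i)
        ((EuclideanSpace.proj i : E m →L[ℝ] ℝ).comp (fderiv ℝ X p)) p :=
      (EuclideanSpace.proj (𝕜 := ℝ) i).hasFDerivAt.comp p hX.hasFDerivAt
    have h2 := (hdF (EuclideanSpace.single i 1)).hasFDerivAt
    have := h1.fun_mul h2
    rw [add_comm]
    exact this
  have hmain : HasFDerivAt (fun q => F q (X q))
      (∑ i : Fin m, ((F p (EuclideanSpace.single i 1)) •
          ((EuclideanSpace.proj i : E m →L[ℝ] ℝ).comp (fderiv ℝ X p))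
        + X p i • fderiv ℝ (fun q => F q (EuclideanSpace.single i 1)) p)) p := by
    apply hsum.congr_of_eventuallyEq
    filter_upwards [hs.mem_nhds hp] with q hq
    exact key q hq
  convert hmain using 1
  rw [Finset.sum_add_distrib]

lemma chain_fderiv_apply {X : E m → E m} (hX : DifferentiableAt ℝ X p) (u : E m) :
    fderiv ℝ (fun q => F q (X q)) p u
      = fderiv ℝ (fun q => F q (X p)) p u + F p (fderiv ℝ X p u) := by
  classical
  rw [(chain_hasFDerivAt hs hp hlin hdF hX).fderiv]
  have h1 : fderiv ℝ (fun q => F q (X p)) p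
      = ∑ i : Fin m, X p i • fderiv ℝ (fun q => F q (EuclideanSpace.single i 1)) p := by
    conv_lhs => rw [← euclid_sum m (X p)]
    exact fderiv_lin_sum hs hp hlin hdF Finset.univ _ _
  have h2 : F p (fderiv ℝ X p u)
      = ∑ i : Fin m, (fderiv ℝ X p u) i * F p (EuclideanSpace.single i 1) := by
    conv_lhs => rw [← euclid_sum m (fderiv ℝ X p u)]
    rw [show F p (∑ i : Fin m, (fderiv ℝ X p u) i • EuclideanSpace.single i (1:ℝ))
        = ((hlin p hp).mk' (F p)) (∑ i : Fin m, (fderiv ℝ X p u) i • EuclideanSpace.single i (1:ℝ)) from rfl,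
      map_sum]
    simp
  rw [h1, h2]
  simp only [ContinuousLinearMap.add_apply, ContinuousLinearMap.sum_apply,
    ContinuousLinearMap.smul_apply, ContinuousLinearMap.coe_comp', Function.comp_apply]
  simp only [EuclideanSpace.proj, PiLp.proj_apply]
  rw [add_comm]
  congr 1
  exact Finset.sum_congr rfl fun i _ => by rw [smul_eq_mul]; ring

lemma chain_differentiableAt {X : E m → E m} (hX : DifferentiableAt ℝ X p) :
    DifferentiableAt ℝ (fun q => F q (X q)) p :=
  (chain_hasFDerivAt hs hp hlin hdF hX).differentiableAt

end Chain

section Basic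

variable {s : Set V}

lemma metric_lin2 {g : V → V → V → ℝ} (hm : IsMetricOn s g) {p : V} (hp : p ∈ s) (u : V) :
    IsLinearMap ℝ (fun v => g p u v) := by
  constructor
  · intro v w
    rw [hm.2.1 p hp u (v + w), (hm.2.2.1 p hp u).map_add, hm.2.1 p hp v u, hm.2.1 p hp w u]
  · intro c v
    rw [hm.2.1 p hp u (c • v), (hm.2.2.1 p hp u).map_smul, hm.2.1 p hp v u]

lemma acm_phi_xi (S : ACM s) {p : V} (hp : p ∈ s) : S.phi p (S.xi p) = 0 := by
  have hz : S.phi p (0 : V) = 0 := ((S.lin_phi p hp).mk' _).map_zero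
  have h1 : S.phi p (S.phi p (S.xi p)) = 0 := by
    rw [S.phi_sq p hp, S.eta_xi p hp]; simp
  have h2 : S.phi p (S.xi p) = S.eta p (S.phi p (S.xi p)) • S.xi p := by
    have h := S.phi_sq p hp (S.phi p (S.xi p))
    rw [h1, hz] at h
    linear_combination (norm := module) h
  set c : ℝ := S.eta p (S.phi p (S.xi p)) with hc
  have hg0 : S.g p (0 : V) (0 : V) = 0 := ((S.metric.2.2.1 p hp 0).mk' _).map_zero
  have hA : S.g p (S.phi p (S.xi p)) (S.phi p (S.xi p)) = c * c := by
    have h := S.compat p hp (S.phi p (S.xi p)) (S.phi p (S.xi p))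
    rw [h1, hg0] at h
    linarith
  have hB : S.g p (S.phi p (S.xi p)) (S.phi p (S.xi p))
      = c * (c * S.g p (S.xi p) (S.xi p)) := by
    conv_lhs => rw [h2]
    rw [(S.metric.2.2.1 p hp _).map_smul, (metric_lin2 S.metric hp _).map_smul]
    simp [mul_assoc]
  have hC : c * c = S.g p (S.xi p) (S.xi p) - 1 := by
    have h := S.compat p hp (S.xi p) (S.xi p)
    rw [S.eta_xi p hp, hA] at h
    linarith
  have h4 : (c*c) * (c*c) = 0 := by linear_combination (c*c) * hC + hA - hB
  have hc0 : c = 0 := mul_self_eq_zero.mp (mul_self_eq_zero.mp h4)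
  rw [h2, hc0, zero_smul]

lemma acm_g_xi (S : ACM s) {p : V} (hp : p ∈ s) (u : V) :
    S.g p u (S.xi p) = S.eta p u := by
  have h := S.compat p hp u (S.xi p)
  rw [acm_phi_xi S hp, S.eta_xi p hp] at h
  have hz : S.g p (S.phi p u) (0 : V) = 0 := ((metric_lin2 S.metric hp _).mk' _).map_zero
  rw [hz] at h
  linarith

lemma koszul {g : V → V → V → ℝ} {Γ : V → V → V → V} (hΓ : IsLeviCivitaOn s g Γ)
    (hsym : ∀ p ∈ s, ∀ u v : V, g p u v = g p v u) {p : V} (hp : p ∈ s) (u v w : V) :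
    fderiv ℝ (fun q => g q v w) p u + fderiv ℝ (fun q => g q u w) p v
      - fderiv ℝ (fun q => g q u v) p w = 2 * g p (Γ p u v) w := by
  have h1 := hΓ.2.2 p hp u v w
  have h2 := hΓ.2.2 p hp v u w
  have h3 := hΓ.2.2 p hp w u v
  have hΓs := hΓ.2.1 p hp
  rw [h1, h2, h3, hΓs v u, hΓs w u, hΓs w v]
  have e1 := hsym p hp v (Γ p u w)
  have e2 := hsym p hp u (Γ p v w)
  linarith

/-- The auxiliary tensor `B(u,v) = (∇ᵤ η)(v)`. -/
def Bten (eta : V → V → ℝ) (Γ : V → V → V → V) (p u v : V) : ℝ :=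
  fderiv ℝ (fun q => eta q v) p u - eta p (Γ p u v)

end Basic

set_option maxHeartbeats 2000000 in
/-- invariance of `R_{XY}ξ` and the (κ,μ)'-nullity condition under
D-homothetic deformations. -/
theorem stmt_0 (n : ℕ) (s : Set (E (2*n+1))) (hs : IsOpen s) (S : ACM s)
    (α β κ μ : ℝ) (hAK : IsAK s S α) (hβ : 0 < β)
    (Γ Γb : E (2*n+1) → E (2*n+1) → E (2*n+1) → E (2*n+1))
    (hΓ : IsLeviCivitaOn s S.g Γ)
    (hnull : KMuNullity s S α κ μ Γ)
    (gb : E (2*n+1) → E (2*n+1) → E (2*n+1) → ℝ)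
    (hgb : ∀ p u v : E (2*n+1),
      gb p u v = β * S.g p u v + β * (β - 1) * (S.eta p u * S.eta p v))
    (hΓb : IsLeviCivitaOn s gb Γb) :
    (∀ p ∈ s, ∀ u v : E (2*n+1), Rm Γb p u v (S.xi p) = Rm Γ p u v (S.xi p)) ∧
    (∀ p ∈ s, ∀ u v : E (2*n+1),
      Rm Γb p u v (β⁻¹ • S.xi p)
        = (κ / β^2) • ((β * S.eta p v) • u - (β * S.eta p u) • v)
          + (μ / β^2) • ((β * S.eta p v) • hpr (α/β) S.phi (fun q => β⁻¹ • S.xi q) p u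
              - (β * S.eta p u) • hpr (α/β) S.phi (fun q => β⁻¹ • S.xi q) p v)) := by
  classical
  have hα : α ≠ 0 := ne_of_gt hAK.pos
  have hβ' : β ≠ 0 := ne_of_gt hβ
  have hone : ((⊤ : ℕ∞) : WithTop ℕ∞) ≠ 0 := by simp
  -- differentiability toolkit
  have hgd : ∀ p ∈ s, ∀ u v : E (2*n+1), DifferentiableAt ℝ (fun q => S.g q u v) p :=
    fun p hp u v => ((S.metric.1 u v).contDiffAt (hs.mem_nhds hp)).differentiableAt hone
  have hetad : ∀ p ∈ s, ∀ v : E (2*n+1), DifferentiableAt ℝ (fun q => S.eta q v) p :=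
    fun p hp v => ((S.smooth_eta v).contDiffAt (hs.mem_nhds hp)).differentiableAt hone
  have hxid : ∀ p ∈ s, DifferentiableAt ℝ S.xi p :=
    fun p hp => (S.smooth_xi.contDiffAt (hs.mem_nhds hp)).differentiableAt hone
  have hΓd : ∀ p ∈ s, ∀ u v : E (2*n+1), DifferentiableAt ℝ (fun q => Γ q u v) p :=
    fun p hp u v => ((hΓ.1.1 u v).contDiffAt (hs.mem_nhds hp)).differentiableAt hone
  have hΓbd : ∀ p ∈ s, ∀ u v : E (2*n+1), DifferentiableAt ℝ (fun q => Γb q u v) p :=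
    fun p hp u v => ((hΓb.1.1 u v).contDiffAt (hs.mem_nhds hp)).differentiableAt hone
  have hetadd : ∀ p ∈ s, ∀ w v : E (2*n+1),
      DifferentiableAt ℝ (fun q => fderiv ℝ (fun r => S.eta r w) q v) p := by
    intro p hp w v
    have h1 : ContDiffAt ℝ 1 (fderiv ℝ (fun r => S.eta r w)) p :=
      ((S.smooth_eta w).contDiffAt (hs.mem_nhds hp)).fderiv_right (m := 1)
        (by norm_cast)
    exact (h1.clm_apply contDiffAt_const).differentiableAt one_ne_zero
  -- algebra toolkit
  have gsym := S.metric.2.1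
  have glin1 := S.metric.2.2.1
  have glin2 : ∀ p ∈ s, ∀ u : E (2*n+1), IsLinearMap ℝ (fun v => S.g p u v) :=
    fun p hp u => metric_lin2 S.metric hp u
  have gxi : ∀ p ∈ s, ∀ u : E (2*n+1), S.g p u (S.xi p) = S.eta p u :=
    fun p hp u => acm_g_xi S hp u
  have hAsym : ∀ p ∈ s, ∀ u v : E (2*n+1),
      fderiv ℝ (fun q => S.eta q v) p u = fderiv ℝ (fun q => S.eta q u) p v := by
    intro p hp u v
    have h := hAK.deta p hp u v
    unfold dEta at h
    linarith
  -- differentiability of B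
  have hcomp_d : ∀ p ∈ s, ∀ u v : E (2*n+1),
      DifferentiableAt ℝ (fun q => S.eta q (Γ q u v)) p := by
    intro p hp u v
    exact chain_differentiableAt hs hp S.lin_eta (fun y => hetad p hp y) (hΓd p hp u v)
  have hBd : ∀ p ∈ s, ∀ u v : E (2*n+1),
      DifferentiableAt ℝ (fun q => Bten S.eta Γ q u v) p := by
    intro p hp u v
    exact (hetadd p hp v u).sub (hcomp_d p hp u v)
  have hBlin : ∀ p ∈ s, ∀ v : E (2*n+1), IsLinearMap ℝ (fun y => Bten S.eta Γ p v y) := by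
    intro p hp v
    constructor
    · intro y z
      unfold Bten
      have h1 := congrFun (congrArg DFunLike.coe
        (fderiv_lin_add hs hp S.lin_eta (fun y => hetad p hp y) y z)) v
      simp only [ContinuousLinearMap.add_apply] at h1
      rw [h1, (hΓ.1.2.2 p hp v).map_add, (S.lin_eta p hp).map_add]
      ring
    · intro c y
      unfold Bten
      have h1 := congrFun (congrArg DFunLike.coe
        (fderiv_lin_smul hs hp S.lin_eta (fun y => hetad p hp y) c y)) v
      simp only [ContinuousLinearMap.smul_apply] at h1
      rw [h1, (hΓ.1.2.2 p hp v).map_smul, (S.lin_eta p hp).map_smul]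
      simp only [smul_eq_mul]
      ring
  -- D1 : B(u,v) = g(v, ∇ᵤξ)
  have hBg : ∀ p ∈ s, ∀ u v : E (2*n+1),
      Bten S.eta Γ p u v = S.g p v (cov Γ S.xi p u) := by
    intro p hp u v
    have hch := chain_fderiv_apply hs hp (F := fun q y => S.g q v y)
      (fun q hq => glin2 q hq v) (fun y => hgd p hp v y) (hxid p hp) u
    have hev : (fun q => S.g q v (S.xi q)) =ᶠ[nhds p] (fun q => S.eta q v) := by
      filter_upwards [hs.mem_nhds hp] with q hq
      exact gxi q hq v
    rw [hev.fderiv_eq] at hch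
    have hmc := hΓ.2.2 p hp u v (S.xi p)
    rw [hmc] at hch
    unfold Bten cov
    rw [hch, gxi p hp (Γ p u v), (glin2 p hp v).map_add]
    ring
  -- D2 : B(u, ξ) = 0
  have hBxi : ∀ p ∈ s, ∀ u : E (2*n+1), Bten S.eta Γ p u (S.xi p) = 0 := by
    intro p hp u
    have hch := chain_fderiv_apply hs hp (F := S.eta)
      S.lin_eta (fun y => hetad p hp y) (hxid p hp) u
    have hev : (fun q => S.eta q (S.xi q)) =ᶠ[nhds p] (fun _ => (1:ℝ)) := by
      filter_upwards [hs.mem_nhds hp] with q hq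
      exact S.eta_xi q hq
    rw [hev.fderiv_eq, fderiv_const_apply] at hch
    simp only [ContinuousLinearMap.zero_apply, Pi.zero_apply] at hch
    have h1 : Bten S.eta Γ p u (S.xi p) = - S.eta p (cov Γ S.xi p u) := by
      unfold Bten cov
      rw [(S.lin_eta p hp).map_add]
      linarith
    have h2 : Bten S.eta Γ p u (S.xi p) = S.eta p (cov Γ S.xi p u) := by
      rw [hBg p hp u (S.xi p), gsym p hp, gxi p hp]
    linarith [h1, h2]
  -- D3 : derivative of B(v, ·) against ξ
  have hBfd : ∀ p ∈ s, ∀ u v : E (2*n+1),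
      fderiv ℝ (fun q => Bten S.eta Γ q v (S.xi p)) p u
        = - Bten S.eta Γ p v (fderiv ℝ S.xi p u) := by
    intro p hp u v
    have hch := chain_fderiv_apply hs hp (F := fun q y => Bten S.eta Γ q v y)
      (fun q hq => hBlin q hq v) (fun y => hBd p hp v y) (hxid p hp) u
    have hev : (fun q => Bten S.eta Γ q v (S.xi q)) =ᶠ[nhds p] (fun _ => (0:ℝ)) := by
      filter_upwards [hs.mem_nhds hp] with q hq
      exact hBxi q hq v
    rw [hev.fderiv_eq, fderiv_const_apply] at hch
    simp only [ContinuousLinearMap.zero_apply, Pi.zero_apply] at hch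
    linarith
  -- gb basics
  have hgbsym : ∀ p ∈ s, ∀ u v : E (2*n+1), gb p u v = gb p v u := by
    intro p hp u v
    rw [hgb, hgb, gsym p hp u v]
    ring
  have hgbd : ∀ p ∈ s, ∀ u v : E (2*n+1), DifferentiableAt ℝ (fun q => gb q u v) p := by
    intro p hp u v
    have hfun : (fun q => gb q u v)
        = fun q => β * S.g q u v + β * (β-1) * (S.eta q u * S.eta q v) :=
      funext fun q => hgb q u v
    rw [hfun]
    exact ((hgd p hp u v).const_mul β).add
      (((hetad p hp u).mul (hetad p hp v)).const_mul (β * (β-1)))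
  -- derivative of gb
  have hgbfd : ∀ p ∈ s, ∀ u v w : E (2*n+1),
      fderiv ℝ (fun q => gb q v w) p u
        = β * fderiv ℝ (fun q => S.g q v w) p u
          + β * (β-1) * (fderiv ℝ (fun q => S.eta q v) p u * S.eta p w
            + S.eta p v * fderiv ℝ (fun q => S.eta q w) p u) := by
    intro p hp u v w
    have hfun : (fun q => gb q v w)
        = fun q => β * S.g q v w + β * (β-1) * (S.eta q v * S.eta q w) :=
      funext fun q => hgb q v w
    have h1 := ((hgd p hp v w).hasFDerivAt.const_mul β).fun_add
      ((((hetad p hp v).hasFDerivAt.fun_mul (hetad p hp w).hasFDerivAt)).const_mul (β * (β-1)))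
    rw [hfun, h1.fderiv]
    simp only [ContinuousLinearMap.add_apply, ContinuousLinearMap.smul_apply, smul_eq_mul,
      ContinuousLinearMap.coe_smul', Pi.smul_apply]
    ring
  -- the deformed Christoffel symbols
  have hΓbeq : ∀ p ∈ s, ∀ u v : E (2*n+1),
      Γb p u v = Γ p u v + (((β-1)/β) * Bten S.eta Γ p u v) • S.xi p := by
    intro p hp u v
    have hKb := fun w => koszul hΓb hgbsym hp u v w
    have hK := fun w => koszul hΓ gsym hp u v w
    -- compute the Koszul expression for gb
    have hRHS : ∀ w : E (2*n+1), 2 * gb p (Γb p u v) w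
        = 2 * β * S.g p (Γ p u v) w
          + 2 * β * (β-1) * (fderiv ℝ (fun q => S.eta q v) p u * S.eta p w) := by
      intro w
      rw [← hKb w, hgbfd p hp u v w, hgbfd p hp v u w, hgbfd p hp w u v,
        hAsym p hp v u, hAsym p hp w u, hAsym p hp w v]
      linear_combination β * hK w
    have hcand : ∀ w : E (2*n+1),
        2 * gb p (Γ p u v + (((β-1)/β) * Bten S.eta Γ p u v) • S.xi p) w
        = 2 * β * S.g p (Γ p u v) w
          + 2 * β * (β-1) * (fderiv ℝ (fun q => S.eta q v) p u * S.eta p w) := by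
      intro w
      rw [hgb, (glin1 p hp w).map_add, (glin1 p hp w).map_smul,
        (S.lin_eta p hp).map_add, (S.lin_eta p hp).map_smul]
      rw [show S.g p (S.xi p) w = S.eta p w from by rw [gsym p hp, gxi p hp]]
      rw [S.eta_xi p hp]
      unfold Bten
      simp only [smul_eq_mul]
      field_simp
      ring
    -- nondegeneracy of gb
    have hzero : ∀ w : E (2*n+1),
        gb p (Γb p u v - (Γ p u v + (((β-1)/β) * Bten S.eta Γ p u v) • S.xi p)) w = 0 := by
      intro w
      have h1 := hRHS w
      have h2 := hcand w
      rw [hgb]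
      rw [hgb] at h1 h2
      rw [(glin1 p hp w).map_sub, (S.lin_eta p hp).map_sub]
      linear_combination (1/2 : ℝ) * h1 - (1/2 : ℝ) * h2
    have hmain : Γb p u v - (Γ p u v + (((β-1)/β) * Bten S.eta Γ p u v) • S.xi p) = 0 := by
      set x := Γb p u v - (Γ p u v + (((β-1)/β) * Bten S.eta Γ p u v) • S.xi p) with hxdef
      by_contra hne
      have hgx : ∀ w : E (2*n+1), S.g p (x + ((β-1) * S.eta p x) • S.xi p) w = 0 := by
        intro w
        have h := hzero w
        rw [hgb] at h
        rw [(glin1 p hp w).map_add, (glin1 p hp w).map_smul]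
        rw [show S.g p (S.xi p) w = S.eta p w from by rw [gsym p hp, gxi p hp]]
        have : β * (S.g p x w + (β-1) * S.eta p x * S.eta p w) = 0 := by
          rw [← h]; ring
        have h2 : S.g p x w + (β-1) * S.eta p x * S.eta p w = 0 := by
          rcases mul_eq_zero.mp this with h3 | h3
          · exact absurd h3 hβ'
          · linarith
        simpa [smul_eq_mul] using h2
      rcases eq_or_ne (x + ((β-1) * S.eta p x) • S.xi p) 0 with h0 | h0
      · have hetax : S.eta p x = 0 := by
          have hz0 : S.eta p (0 : E (2*n+1)) = 0 := ((S.lin_eta p hp).mk' _).map_zero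
          have := congrArg (S.eta p) h0
          rw [(S.lin_eta p hp).map_add, (S.lin_eta p hp).map_smul, S.eta_xi p hp, hz0] at this
          simp only [smul_eq_mul, mul_one] at this
          have hb : β * S.eta p x = 0 := by linarith
          rcases mul_eq_zero.mp hb with h | h
          · exact absurd h hβ'
          · exact h
        rw [hetax] at h0
        simp only [mul_zero, zero_smul, add_zero] at h0
        exact hne h0
      · exact absurd (hgx _) (ne_of_gt (S.metric.2.2.2 p hp _ h0))
    exact sub_eq_zero.mp hmain
  -- PART 1 : invariance of R ξ
  have part1 : ∀ p ∈ s, ∀ u v : E (2*n+1), Rm Γb p u v (S.xi p) = Rm Γ p u v (S.xi p) := by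
    intro p hp u v
    have key : ∀ a x : E (2*n+1),
        fderiv ℝ (fun q => Γb q a (S.xi p)) p x
          = fderiv ℝ (fun q => Γ q a (S.xi p)) p x
            - (((β-1)/β) * Bten S.eta Γ p a (fderiv ℝ S.xi p x)) • S.xi p := by
      intro a x
      have hBd' : DifferentiableAt ℝ (fun q => ((β-1)/β) * Bten S.eta Γ q a (S.xi p)) p :=
        (hBd p hp a (S.xi p)).const_mul _
      have hprod := hBd'.hasFDerivAt.smul (hxid p hp).hasFDerivAt
      have hsum := (hΓd p hp a (S.xi p)).hasFDerivAt.add hprod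
      have heq : (fun q => Γb q a (S.xi p)) =ᶠ[nhds p]
          (fun q => Γ q a (S.xi p) + (((β-1)/β) * Bten S.eta Γ q a (S.xi p)) • S.xi q) := by
        filter_upwards [hs.mem_nhds hp] with q hq
        exact hΓbeq q hq a (S.xi p)
      rw [(hsum.congr_of_eventuallyEq heq).fderiv]
      have hfB : fderiv ℝ (fun q => ((β-1)/β) * Bten S.eta Γ q a (S.xi p)) p x
          = -(((β-1)/β) * Bten S.eta Γ p a (fderiv ℝ S.xi p x)) := by
        rw [fderiv_const_mul (hBd p hp a (S.xi p))]
        simp only [ContinuousLinearMap.smul_apply, smul_eq_mul]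
        rw [hBfd p hp x a]
        ring
      simp only [ContinuousLinearMap.add_apply, ContinuousLinearMap.smul_apply,
        ContinuousLinearMap.smulRight_apply, ContinuousLinearMap.coe_smul', Pi.smul_apply]
      rw [hBxi p hp a, hfB]
      module
    have hΓbv : Γb p v (S.xi p) = Γ p v (S.xi p) := by
      rw [hΓbeq p hp v (S.xi p), hBxi p hp v]; simp
    have hΓbu : Γb p u (S.xi p) = Γ p u (S.xi p) := by
      rw [hΓbeq p hp u (S.xi p), hBxi p hp u]; simp
    have e1 : Bten S.eta Γ p u (cov Γ S.xi p v) = Bten S.eta Γ p v (cov Γ S.xi p u) := by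
      rw [hBg p hp u, hBg p hp v]
      exact gsym p hp _ _
    have e2 : Bten S.eta Γ p u (fderiv ℝ S.xi p v) + Bten S.eta Γ p u (Γ p v (S.xi p))
        = Bten S.eta Γ p v (fderiv ℝ S.xi p u) + Bten S.eta Γ p v (Γ p u (S.xi p)) := by
      have h1 := (hBlin p hp u).map_add (fderiv ℝ S.xi p v) (Γ p v (S.xi p))
      have h2 := (hBlin p hp v).map_add (fderiv ℝ S.xi p u) (Γ p u (S.xi p))
      unfold cov at e1
      linarith [h1, h2, e1]
    unfold Rm
    rw [key v u, key u v, hΓbv, hΓbu,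
      hΓbeq p hp u (Γ p v (S.xi p)), hΓbeq p hp v (Γ p u (S.xi p))]
    have e3 : (((β-1)/β) * (Bten S.eta Γ p u (fderiv ℝ S.xi p v)
            + Bten S.eta Γ p u (Γ p v (S.xi p)))) • S.xi p
        = (((β-1)/β) * (Bten S.eta Γ p v (fderiv ℝ S.xi p u)
            + Bten S.eta Γ p v (Γ p u (S.xi p)))) • S.xi p := by
      rw [e2]
    linear_combination (norm := module) e3
  -- PART 2
  have hpr_eq : ∀ p ∈ s, ∀ u : E (2*n+1),
      hpr (α/β) S.phi (fun q => β⁻¹ • S.xi q) p u = hpr α S.phi S.xi p u := by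
    intro p hp u
    unfold hpr lieXiPhi
    have h1 : fderiv ℝ (fun q => β⁻¹ • S.xi q) p = β⁻¹ • fderiv ℝ S.xi p :=
      fderiv_const_smul (hxid p hp) β⁻¹
    rw [h1, (fderiv ℝ (fun q => S.phi q (S.phi p u)) p).map_smul]
    simp only [ContinuousLinearMap.smul_apply, Pi.smul_apply, ContinuousLinearMap.coe_smul']
    rw [(S.lin_phi p hp).map_smul]
    match_scalars <;> (field_simp; try ring)
  have hRmw : ∀ p ∈ s, ∀ (u v w : E (2*n+1)) (c : ℝ),
      Rm Γb p u v (c • w) = c • Rm Γb p u v w := by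
    intro p hp u v w c
    have h1 : ∀ a : E (2*n+1), fderiv ℝ (fun q => Γb q a (c • w)) p
        = c • fderiv ℝ (fun q => Γb q a w) p := by
      intro a
      have he : (fun q => Γb q a (c • w)) =ᶠ[nhds p] (fun q => c • Γb q a w) := by
        filter_upwards [hs.mem_nhds hp] with q hq
        exact (hΓb.1.2.2 q hq a).map_smul c w
      rw [he.fderiv_eq, fderiv_fun_const_smul (hΓbd p hp a w)]
    unfold Rm
    rw [h1 v, h1 u, (hΓb.1.2.2 p hp v).map_smul c w, (hΓb.1.2.2 p hp u).map_smul c w,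
      (hΓb.1.2.2 p hp u).map_smul c (Γb p v w), (hΓb.1.2.2 p hp v).map_smul c (Γb p u w)]
    simp only [ContinuousLinearMap.smul_apply, Pi.smul_apply, ContinuousLinearMap.coe_smul']
    module
  refine ⟨part1, ?_⟩
  intro p hp u v
  rw [hRmw p hp u v (S.xi p) β⁻¹, part1 p hp u v, hnull p hp u v,
    hpr_eq p hp u, hpr_eq p hp v]
  clear hΓbeq hBfd hBxi hBg hBlin hBd hcomp_d hAsym gxi glin2 glin1 gsym hetadd hΓbd hΓd
  clear hxid hetad hgd hgbfd hgbd hgbsym hone part1 hpr_eq hRmw hnull hΓ hΓb hgb hAK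
  match_scalars <;> (field_simp; try ring)


end AKG
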